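/- arXiv:2001.00376 — 3 statements merged into one kernel-verified Lean document; each statement's English description precedes it below -/
import Mathlib

section
/- Every subspace A of the metric space ℕ (with the euclidean metric) admits tilings of arbitrary invariance: for every R > 0 and ε > 0 there exists a partition of A into finite sets, each of which is an (R, ε)-Følner set in A, with uniformly bounded diameters. -/
open Classical

/-- window half-width -/
def Wd (r s : ℕ) : ℕ := (s+1)*(2*r+1)
/-- period -/
def Md (r s : ℕ) : ℕ := 2*(Wd r s)+1

/-- `t` is a clean cut point: no point of `A` within distance `r` of `t`. -/
def IsClean (A : Set ℕ) (r t : ℕ) : Prop := ∀ a ∈ A, ¬(a ≤ t + r ∧ t ≤ a + r)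

noncomputable def cut (A : Set ℕ) (r s j : ℕ) : ℕ :=
  if j = 0 then 0
  else if h : ∃ k, k ≤ 2*s+1 ∧ IsClean A r (j * Md r s - Wd r s + k*(2*r+1) + r)
  then j * Md r s - Wd r s + h.choose * (2*r+1) + r
  else j * Md r s

lemma wd_le_mul (r s : ℕ) {j : ℕ} (hj : j ≠ 0) : Wd r s ≤ j * Md r s := by
  have h1 : Wd r s ≤ Md r s := by unfold Md; omega
  have h2 : 1 * Md r s ≤ j * Md r s :=
    Nat.mul_le_mul_right _ (Nat.one_le_iff_ne_zero.mpr hj)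
  have h2' : Md r s ≤ j * Md r s := by simpa using h2
  exact h1.trans h2'

lemma base_add (r s : ℕ) {j : ℕ} (hj : j ≠ 0) :
    j * Md r s - Wd r s + Wd r s = j * Md r s :=
  Nat.sub_add_cancel (wd_le_mul r s hj)

lemma cand_bound {r s k : ℕ} (hk : k ≤ 2*s+1) :
    k*(2*r+1) + (2*r+1) ≤ 2 * Wd r s := by
  have h1 : k*(2*r+1) ≤ (2*s+1)*(2*r+1) := Nat.mul_le_mul_right _ hk
  have h2 : (2*s+1)*(2*r+1) + (2*r+1) = 2 * Wd r s := by unfold Wd; ring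
  linarith

lemma cut_zero (A : Set ℕ) (r s : ℕ) : cut A r s 0 = 0 := by simp [cut]

lemma cut_ub (A : Set ℕ) (r s j : ℕ) : cut A r s j ≤ j * Md r s + Wd r s := by
  unfold cut
  split
  · simp
  · next hj =>
    split
    · next h =>
      obtain ⟨hk, -⟩ := h.choose_spec
      have h1 := cand_bound (r := r) (s := s) hk
      have h2 := base_add r s hj
      linarith
    · exact Nat.le_add_right _ _

lemma cut_lb (A : Set ℕ) (r s : ℕ) {j : ℕ} (hj : j ≠ 0) :
    j * Md r s ≤ cut A r s j + Wd r s := by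
  unfold cut
  rw [if_neg hj]
  split
  · next h =>
    have h2 := base_add r s hj
    have h3 : 0 ≤ h.choose * (2*r+1) + r := Nat.zero_le _
    linarith
  · exact Nat.le_add_right _ _

lemma cut_self_le (A : Set ℕ) (r s j : ℕ) : j ≤ cut A r s j := by
  rcases eq_or_ne j 0 with rfl | hj
  · simp [cut_zero]
  · have h1 := cut_lb A r s hj
    have h2 : j * Md r s = 2*(j * Wd r s) + j := by unfold Md; ring
    have h3 : Wd r s ≤ j * Wd r s := Nat.le_mul_of_pos_left _ (Nat.pos_of_ne_zero hj)
    linarith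

lemma cut_lt (A : Set ℕ) (r s j : ℕ) : cut A r s j < cut A r s (j+1) := by
  have h1 := cut_ub A r s j
  have h2 := cut_lb A r s (j := j+1) (Nat.succ_ne_zero j)
  have h3 : (j+1) * Md r s = j * Md r s + Md r s := by ring
  have h4 : Md r s = 2 * Wd r s + 1 := rfl
  linarith

lemma cut_mono (A : Set ℕ) (r s : ℕ) : StrictMono (cut A r s) :=
  strictMono_nat_of_lt_succ (cut_lt A r s)

lemma cut_gap (A : Set ℕ) (r s j : ℕ) :
    cut A r s (j+1) ≤ cut A r s j + (Md r s + 2 * Wd r s) := by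
  rcases eq_or_ne j 0 with rfl | hj
  · have h1 := cut_ub A r s 1
    rw [cut_zero, one_mul] at *
    linarith
  · have h1 := cut_ub A r s (j+1)
    have h2 := cut_lb A r s hj
    have h3 : (j+1) * Md r s = j * Md r s + Md r s := by ring
    linarith

lemma cut_dichotomy (A : Set ℕ) (r s : ℕ) {j : ℕ} (hj : j ≠ 0) :
    IsClean A r (cut A r s j) ∨
    (cut A r s j = j * Md r s ∧
      ∀ k, k ≤ 2*s+1 → ∃ a ∈ A,
        j * Md r s - Wd r s + k*(2*r+1) ≤ a ∧
        a ≤ j * Md r s - Wd r s + k*(2*r+1) + 2*r) := by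
  unfold cut
  rw [if_neg hj]
  split
  · next h => exact Or.inl h.choose_spec.2
  · next h =>
    push_neg at h
    refine Or.inr ⟨rfl, fun k hk => ?_⟩
    have h2 := h k hk
    unfold IsClean at h2
    push_neg at h2
    obtain ⟨a, ha, h3, h4⟩ := h2
    refine ⟨a, ha, ?_, ?_⟩
    · generalize j * Md r s - Wd r s + k*(2*r+1) = t at h3 h4 ⊢
      omega
    · generalize j * Md r s - Wd r s + k*(2*r+1) = t at h3 h4 ⊢
      omega

lemma ncard_ge (T : Set ℕ) (hT : T.Finite) (n : ℕ) (f : ℕ → ℕ)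
    (hmem : ∀ k, k < n → f k ∈ T)
    (hmono : ∀ k₁ k₂, k₁ < k₂ → k₂ < n → f k₁ < f k₂) :
    n ≤ T.ncard := by
  classical
  have hinj : Set.InjOn f ↑(Finset.range n) := by
    intro k₁ h1 k₂ h2 heq
    simp only [Finset.coe_range, Set.mem_Iio] at h1 h2
    rcases lt_trichotomy k₁ k₂ with h | h | h
    · exact absurd heq (hmono k₁ k₂ h h2).ne
    · exact h
    · exact absurd heq.symm (hmono k₂ k₁ h h1).ne
  calc n = (Finset.range n).card := (Finset.card_range n).symm
    _ = ((Finset.range n).image f).card := (Finset.card_image_of_injOn hinj).symm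
    _ = ((↑((Finset.range n).image f) : Set ℕ)).ncard := (Set.ncard_coe_finset _).symm
    _ ≤ T.ncard := by
        refine Set.ncard_le_ncard ?_ hT
        intro x hx
        simp only [Finset.coe_image, Finset.coe_range, Set.mem_image, Set.mem_Iio] at hx
        obtain ⟨k, hk, rfl⟩ := hx
        exact hmem k hk

lemma blk_finite (A : Set ℕ) (r s j : ℕ) :
    {a : ℕ | a ∈ A ∧ cut A r s j ≤ a ∧ a < cut A r s (j+1)}.Finite :=
  Set.Finite.subset (Set.finite_Ico (cut A r s j) (cut A r s (j+1)))
    (fun _ hx => ⟨hx.2.1, hx.2.2⟩)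

lemma occ_choice (A : Set ℕ) (r s : ℕ) {i : ℕ}
    (hocc : ∀ k, k ≤ 2*s+1 → ∃ a ∈ A,
        i * Md r s - Wd r s + k*(2*r+1) ≤ a ∧
        a ≤ i * Md r s - Wd r s + k*(2*r+1) + 2*r) :
    ∃ f : ℕ → ℕ, ∀ k, k ≤ 2*s+1 → f k ∈ A ∧
        i * Md r s - Wd r s + k*(2*r+1) ≤ f k ∧
        f k ≤ i * Md r s - Wd r s + k*(2*r+1) + 2*r := by
  classical
  have h : ∀ k, ∃ a, k ≤ 2*s+1 → a ∈ A ∧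
      i * Md r s - Wd r s + k*(2*r+1) ≤ a ∧
      a ≤ i * Md r s - Wd r s + k*(2*r+1) + 2*r := by
    intro k
    by_cases hk : k ≤ 2*s+1
    · obtain ⟨a, ha⟩ := hocc k hk
      exact ⟨a, fun _ => ha⟩
    · exact ⟨0, fun h' => absurd h' hk⟩
  choose f hf using h
  exact ⟨f, hf⟩

lemma interval_sep (r s : ℕ) {B : ℕ} {k₁ k₂ : ℕ} (h : k₁ < k₂) :
    B + k₁*(2*r+1) + 2*r < B + k₂*(2*r+1) := by
  have h1 : (k₁+1)*(2*r+1) ≤ k₂*(2*r+1) := Nat.mul_le_mul_right _ h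
  have h2 : (k₁+1)*(2*r+1) = k₁*(2*r+1) + (2*r+1) := by ring
  linarith

lemma block_big_right (A : Set ℕ) (r s : ℕ) {i : ℕ} (hi : i ≠ 0)
    (hocc : ∀ k, k ≤ 2*s+1 → ∃ a ∈ A,
        i * Md r s - Wd r s + k*(2*r+1) ≤ a ∧
        a ≤ i * Md r s - Wd r s + k*(2*r+1) + 2*r)
    (hcut : cut A r s i = i * Md r s) :
    s + 1 ≤ {a : ℕ | a ∈ A ∧ cut A r s i ≤ a ∧ a < cut A r s (i+1)}.ncard := by
  obtain ⟨f, hf⟩ := occ_choice A r s hocc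
  have hbase := base_add r s hi
  have hW : ∀ k : ℕ, k ≤ 2*s+1 → Wd r s ≤ k*(2*r+1) ∨ True := fun _ _ => Or.inr trivial
  refine ncard_ge _ (blk_finite A r s i) (s+1) (fun k => f (k + (s+1))) ?_ ?_
  · intro k hk
    have hk' : k + (s+1) ≤ 2*s+1 := by omega
    obtain ⟨hmem, hlo, hhi⟩ := hf (k + (s+1)) hk'
    refine ⟨hmem, ?_, ?_⟩
    · -- cut i = i*M = base + W ≤ base + (k+s+1)(2r+1) ≤ f _
      rw [hcut]
      have h1 : (s+1)*(2*r+1) ≤ (k + (s+1))*(2*r+1) :=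
        Nat.mul_le_mul_right _ (by omega)
      have h2 : Wd r s = (s+1)*(2*r+1) := rfl
      linarith
    · -- f _ ≤ base + (k+s+1)(2r+1) + 2r ≤ base + 2W - 1 = iM + W - 1 < cut (i+1)
      have h1 := cand_bound (r := r) (s := s) hk'
      have h2 := cut_lb A r s (j := i+1) (Nat.succ_ne_zero i)
      have h3 : (i+1) * Md r s = i * Md r s + Md r s := by ring
      have h4 : Md r s = 2 * Wd r s + 1 := rfl
      linarith
  · intro k₁ k₂ h hk2
    have hk1' : k₁ + (s+1) ≤ 2*s+1 := by omega
    have hk2' : k₂ + (s+1) ≤ 2*s+1 := by omega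
    obtain ⟨-, hlo1, hhi1⟩ := hf (k₁ + (s+1)) hk1'
    obtain ⟨-, hlo2, hhi2⟩ := hf (k₂ + (s+1)) hk2'
    have := interval_sep r s (B := i * Md r s - Wd r s)
      (k₁ := k₁ + (s+1)) (k₂ := k₂ + (s+1)) (by omega)
    linarith

lemma block_big_left (A : Set ℕ) (r s m : ℕ)
    (hocc : ∀ k, k ≤ 2*s+1 → ∃ a ∈ A,
        (m+1) * Md r s - Wd r s + k*(2*r+1) ≤ a ∧
        a ≤ (m+1) * Md r s - Wd r s + k*(2*r+1) + 2*r)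
    (hcut : cut A r s (m+1) = (m+1) * Md r s) :
    s + 1 ≤ {a : ℕ | a ∈ A ∧ cut A r s m ≤ a ∧ a < cut A r s (m+1)}.ncard := by
  obtain ⟨f, hf⟩ := occ_choice A r s hocc
  have hbase := base_add r s (j := m+1) (Nat.succ_ne_zero m)
  refine ncard_ge _ (blk_finite A r s m) (s+1) f ?_ ?_
  · intro k hk
    have hk' : k ≤ 2*s+1 := by omega
    obtain ⟨hmem, hlo, hhi⟩ := hf k hk'
    refine ⟨hmem, ?_, ?_⟩
    · -- cut m ≤ (m+1)M - W = base : since cut m ≤ m*M + W and (m+1)M = mM + 2W + 1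
      have h1 := cut_ub A r s m
      have h2 : (m+1) * Md r s = m * Md r s + Md r s := by ring
      have h3 : Md r s = 2 * Wd r s + 1 := rfl
      have h4 : 0 ≤ k*(2*r+1) := Nat.zero_le _
      linarith
    · -- f k ≤ base + k(2r+1) + 2r ≤ base + W - 1 < (m+1)M = cut (m+1)
      rw [hcut]
      have h1 : k*(2*r+1) ≤ s*(2*r+1) := Nat.mul_le_mul_right _ (by omega : k ≤ s)
      have h2 : s*(2*r+1) + (2*r+1) = Wd r s := by unfold Wd; ring
      linarith
  · intro k₁ k₂ h hk2
    obtain ⟨-, hlo1, hhi1⟩ := hf k₁ (by omega)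
    obtain ⟨-, hlo2, hhi2⟩ := hf k₂ (by omega)
    have := interval_sep r s (B := (m+1) * Md r s - Wd r s) (k₁ := k₁) (k₂ := k₂) h
    linarith

/-- Every subspace `A ⊆ ℕ` (euclidean metric) admits tilings of arbitrary invariance:
for all `R, ε > 0` there is a partition of `A` into finite nonempty `(R,ε)`-Følner
sets (boundaries taken inside `A`) with uniformly bounded diameters. -/
theorem stmt4 (A : Set ℕ) :
    ∀ R ε : ℝ, 0 < R → 0 < ε →
      ∃ (P : Set (Set ℕ)) (D : ℝ),
        (∀ a ∈ A, ∃! B : Set ℕ, B ∈ P ∧ a ∈ B) ∧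
        (∀ B ∈ P, B ⊆ A ∧ B.Finite ∧ B.Nonempty ∧
          ({a : ℕ | a ∈ A ∧ a ∉ B ∧ ∃ b ∈ B, |(a : ℝ) - (b : ℝ)| ≤ R}).ncard
              < ε * B.ncard ∧
          (∀ x ∈ B, ∀ y ∈ B, |(x : ℝ) - (y : ℝ)| ≤ D)) := by
  intro R ε hR hε
  classical
  set r : ℕ := ⌈R⌉₊ with hrdef
  have hRr : R ≤ (r : ℝ) := Nat.le_ceil R
  set s : ℕ := ⌈(2 * r : ℝ) / ε⌉₊ with hsdef
  have hs : (2 * r : ℝ) ≤ ε * s := by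
    have h1 := Nat.le_ceil ((2 * r : ℝ) / ε)
    rw [div_le_iff₀ hε] at h1
    rw [hsdef]
    linarith
  set Blk : ℕ → Set ℕ :=
    fun j => {a : ℕ | a ∈ A ∧ cut A r s j ≤ a ∧ a < cut A r s (j+1)} with hBlk
  refine ⟨Blk '' {j | (Blk j).Nonempty}, ((Md r s + 2 * Wd r s : ℕ) : ℝ), ?_, ?_⟩
  · -- partition property
    intro a ha
    have hdec : DecidablePred (fun j => cut A r s j ≤ a) := fun _ => Nat.decLe _ _
    set j := @Nat.findGreatest (fun j => cut A r s j ≤ a) hdec a with hjdef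
    have hj1 : cut A r s j ≤ a := by
      refine Nat.findGreatest_spec (P := fun j => cut A r s j ≤ a) (Nat.zero_le a) ?_
      simp [cut_zero]
    have hj2 : a < cut A r s (j+1) := by
      by_contra hcon
      push_neg at hcon
      have hle : j + 1 ≤ a := le_trans (cut_self_le A r s (j+1)) hcon
      exact Nat.findGreatest_is_greatest (Nat.lt_succ_self j) hle hcon
    have haj : a ∈ Blk j := ⟨ha, hj1, hj2⟩
    refine ⟨Blk j, ⟨⟨j, ⟨a, haj⟩, rfl⟩, haj⟩, ?_⟩
    rintro B ⟨⟨j', hj'ne, rfl⟩, haB⟩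
    have hj'j : j' = j := by
      obtain ⟨-, h1, h2⟩ := haB
      rcases lt_trichotomy j' j with h | h | h
      · have := ((cut_mono A r s).monotone (by omega : j' + 1 ≤ j)).trans hj1
        omega
      · exact h
      · have := ((cut_mono A r s).monotone (by omega : j + 1 ≤ j')).trans h1
        omega
    rw [hj'j]
  · -- each block is good
    rintro B ⟨j, hjne, rfl⟩
    have hjne' : (Blk j).Nonempty := hjne
    have hfin : (Blk j).Finite := blk_finite A r s j
    have hpos : 0 < (Blk j).ncard := (Set.ncard_pos hfin).mpr hjne'
    refine ⟨fun x hx => hx.1, hfin, hjne', ?_, ?_⟩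
    · -- Følner condition
      set t1 := cut A r s j with ht1
      set t2 := cut A r s (j+1) with ht2
      set S : Set ℕ := {a : ℕ | a ∈ A ∧ a ∉ Blk j ∧ ∃ b ∈ Blk j, |(a : ℝ) - (b : ℝ)| ≤ R}
        with hSdef
      have hsub : S ⊆ ↑(Finset.Ico (t1 - r) t1 ∪ Finset.Ico t2 (t2 + r)) := by
        rintro a ⟨ha, hna, b, hb, hab⟩
        obtain ⟨hbA, hb1, hb2⟩ := hb
        have hor : a < t1 ∨ t2 ≤ a := by
          by_contra hcon
          push_neg at hcon
          exact hna ⟨ha, hcon.1, hcon.2⟩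
        have habs := abs_le.mp hab
        simp only [Finset.coe_union, Set.mem_union, Finset.coe_Ico, Set.mem_Ico]
        rcases hor with h | h
        · left
          have h1 : (b : ℝ) ≤ (a : ℝ) + (r : ℝ) := by linarith [habs.1]
          have h2 : b ≤ a + r := by exact_mod_cast h1
          exact ⟨by omega, h⟩
        · right
          have h1 : (a : ℝ) ≤ (b : ℝ) + (r : ℝ) := by linarith [habs.2]
          have h2 : a ≤ b + r := by exact_mod_cast h1
          exact ⟨h, by omega⟩
      have hScard : S.ncard ≤ 2 * r := by
        have h1 := Set.ncard_le_ncard hsub (Finset.finite_toSet _)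
        rw [Set.ncard_coe_finset] at h1
        have h2 := Finset.card_union_le (Finset.Ico (t1 - r) t1) (Finset.Ico t2 (t2 + r))
        rw [Nat.card_Ico, Nat.card_Ico] at h2
        omega
      by_cases hclean : (j = 0 ∨ IsClean A r t1) ∧ IsClean A r t2
      · have hSempty : S = ∅ := by
          ext a
          simp only [Set.mem_empty_iff_false, iff_false]
          intro haS
          have hmem := hsub haS
          obtain ⟨haA, -, -⟩ := haS
          simp only [Finset.coe_union, Set.mem_union, Finset.coe_Ico, Set.mem_Ico] at hmem
          rcases hmem with ⟨h1, h2⟩ | ⟨h1, h2⟩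
          · rcases hclean.1 with h0 | hcl
            · rw [ht1, h0, cut_zero] at h2
              omega
            · exact hcl a haA ⟨by omega, by omega⟩
          · exact hclean.2 a haA ⟨by omega, by omega⟩
        rw [hSempty, Set.ncard_empty]
        have hp : (0 : ℝ) < ((Blk j).ncard : ℝ) := by exact_mod_cast hpos
        simpa using mul_pos hε hp
      · push_neg at hclean
        have hbig : s + 1 ≤ (Blk j).ncard := by
          by_cases hL : j = 0 ∨ IsClean A r t1
          · have hQ := hclean hL
            rcases cut_dichotomy A r s (j := j+1) (Nat.succ_ne_zero j) with h | ⟨hcut, hocc⟩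
            · exact absurd h hQ
            · exact block_big_left A r s j hocc hcut
          · push_neg at hL
            obtain ⟨hj0, hncl⟩ := hL
            rcases cut_dichotomy A r s (j := j) hj0 with h | ⟨hcut, hocc⟩
            · exact absurd h hncl
            · exact block_big_right A r s hj0 hocc hcut
        have h2r : (2 * (r : ℝ)) < ε * ((s : ℝ) + 1) := by
          have he : ε * ((s : ℝ) + 1) = ε * (s : ℝ) + ε := by ring
          linarith
        have hble : ε * ((s : ℝ) + 1) ≤ ε * ((Blk j).ncard : ℝ) := by
          apply mul_le_mul_of_nonneg_left _ hε.le
          exact_mod_cast hbig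
        calc (S.ncard : ℝ) ≤ (2 * (r : ℝ)) := by exact_mod_cast hScard
          _ < ε * ((Blk j).ncard : ℝ) := lt_of_lt_of_le h2r hble
    · -- bounded diameter
      intro x hx y hy
      obtain ⟨-, hx1, hx2⟩ := hx
      obtain ⟨-, hy1, hy2⟩ := hy
      have c1 : (cut A r s j : ℝ) ≤ (x : ℝ) := by exact_mod_cast hx1
      have c2 : (x : ℝ) < (cut A r s (j+1) : ℝ) := by exact_mod_cast hx2
      have c3 : (cut A r s j : ℝ) ≤ (y : ℝ) := by exact_mod_cast hy1
      have c4 : (y : ℝ) < (cut A r s (j+1) : ℝ) := by exact_mod_cast hy2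
      have c5 : (cut A r s (j+1) : ℝ) ≤
          (cut A r s j : ℝ) + ((Md r s : ℝ) + 2 * (Wd r s : ℝ)) := by
        exact_mod_cast cut_gap A r s j
      rw [abs_sub_le_iff]
      push_cast
      constructor <;> linarith
end

section
/- Let S be a preordered commutative monoid (with the algebraic preorder) in which every element x satisfies 2x ≤ x (i.e., every element is properly infinite). Then S is almost unperforated. -/
/-- If every element of a commutative monoid `S` is properly infinite (`2x ≤ x` in
the algebraic preorder), then `S` is almost unperforated. -/
theorem stmt6 (S : Type*) [AddCommMonoid S]
    (h : ∀ x : S, ∃ z : S, 2 • x + z = x) :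
    ∀ (x y : S) (n : ℕ), (∃ z : S, (n + 1) • x + z = n • y) →
      ∃ z : S, x + z = y := by
  intro x y n ⟨z, hz⟩
  have hle : ∀ k : ℕ, ∃ w : S, (k + 1) • y + w = y := by
    intro k
    induction k with
    | zero => exact ⟨0, by simp⟩
    | succ k ih =>
      obtain ⟨w, hw⟩ := ih
      obtain ⟨u, hu⟩ := h y
      refine ⟨w + u, ?_⟩
      have : (k + 1 + 1) • y + (w + u) = ((k + 1) • y + w) + (y + u) := by
        rw [succ_nsmul]; abel
      rw [this, hw]
      have : y + (y + u) = 2 • y + u := by rw [two_nsmul]; abel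
      rw [this, hu]
  match n with
  | 0 =>
    rw [zero_nsmul] at hz
    refine ⟨z + y, ?_⟩
    rw [← add_assoc]
    simpa using congrArg (· + y) hz
  | Nat.succ k =>
    simp only [Nat.succ_eq_add_one] at hz
    obtain ⟨w, hw⟩ := hle k
    refine ⟨(k + 1) • x + z + w, ?_⟩
    have : x + ((k + 1) • x + z + w) = ((k + 1 + 1) • x + z) + w := by
      rw [add_nsmul x (k+1) 1, one_nsmul]; abel
    rw [this, hz, hw]
end

section
/- Let ρ be a [0,∞]-valued function on open subsets of a topological space X that is inner regular with respect to compact open subsets (ρ(V) = sup{ρ(K) : K ⊆ V compact open}) and finitely additive on disjoint compact open sets, with ρ(K' ⊔ K'') = ρ(K') + ρ(K'') and ρ defined on compact open sets. If K is a compact open subset of an open set V, then ρ(V) = ρ(K) + ρ(V \ K). -/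
open scoped ENNReal

/-- Let `ρ` be a `[0,∞]`-valued set function, inner regular on open sets with respect
to compact open subsets and finitely additive on disjoint compact open sets. If `K`
is a compact open subset of an open set `V`, then `ρ(V) = ρ(K) + ρ(V \ K)`. -/
theorem stmt14 (X : Type*) [TopologicalSpace X] [T2Space X]
    (ρ : Set X → ℝ≥0∞)
    (hinner : ∀ V : Set X, IsOpen V →
      ρ V = ⨆ (K : Set X) (_ : IsCompact K ∧ IsOpen K ∧ K ⊆ V), ρ K)
    (hadd : ∀ K₁ K₂ : Set X, IsCompact K₁ → IsOpen K₁ → IsCompact K₂ → IsOpen K₂ →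
      Disjoint K₁ K₂ → ρ (K₁ ∪ K₂) = ρ K₁ + ρ K₂)
    (V K : Set X) (hV : IsOpen V)
    (hK : IsCompact K) (hKo : IsOpen K) (hKV : K ⊆ V) :
    ρ V = ρ K + ρ (V \ K) := by
  have hKc : IsClosed K := hK.isClosed
  have hVK : IsOpen (V \ K) := hV.sdiff hKc
  apply le_antisymm
  · rw [hinner V hV]
    refine iSup_le fun L => iSup_le fun ⟨hLc, hLo, hLV⟩ => ?_
    have h1 : IsCompact (L ∩ K) := hLc.inter_right hKc
    have h1o : IsOpen (L ∩ K) := hLo.inter hKo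
    have h2 : IsCompact (L \ K) := hLc.diff hKo
    have h2o : IsOpen (L \ K) := hLo.sdiff hKc
    have hdisj : Disjoint (L ∩ K) (L \ K) := by
      rw [Set.disjoint_left]
      rintro x ⟨-, hx⟩ ⟨-, hx'⟩
      exact hx' hx
    calc ρ L = ρ (L ∩ K) + ρ (L \ K) := by
          rw [← hadd _ _ h1 h1o h2 h2o hdisj, Set.inter_union_diff]
      _ ≤ ρ K + ρ (V \ K) := by
          refine add_le_add ?_ ?_
          · rw [hinner K hKo]
            exact le_iSup₂ (f := fun s (_ : IsCompact s ∧ IsOpen s ∧ s ⊆ K) => ρ s)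
              (L ∩ K) ⟨h1, h1o, Set.inter_subset_right⟩
          · rw [hinner (V \ K) hVK]
            exact le_iSup₂ (f := fun s (_ : IsCompact s ∧ IsOpen s ∧ s ⊆ V \ K) => ρ s)
              (L \ K) ⟨h2, h2o, fun x hx => ⟨hLV hx.1, hx.2⟩⟩
  · rw [hinner (V \ K) hVK]
    simp only [ENNReal.add_iSup]
    refine iSup_le fun L => ?_
    by_cases hP : IsCompact L ∧ IsOpen L ∧ L ⊆ V \ K
    · rw [iSup_pos hP]
      obtain ⟨hLc, hLo, hLV⟩ := hP
      have hdisj : Disjoint K L := by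
        rw [Set.disjoint_left]
        exact fun x hx hx' => (hLV hx').2 hx
      rw [← hadd _ _ hK hKo hLc hLo hdisj, hinner V hV]
      exact le_iSup₂ (f := fun s (_ : IsCompact s ∧ IsOpen s ∧ s ⊆ V) => ρ s)
        (K ∪ L) ⟨hK.union hLc, hKo.union hLo,
          Set.union_subset hKV (fun x hx => (hLV hx).1)⟩
    · rw [iSup_neg hP]; rw [show (⊥:ℝ≥0∞) = 0 from rfl, add_zero, hinner V hV]
      exact le_iSup₂ (f := fun s (_ : IsCompact s ∧ IsOpen s ∧ s ⊆ V) => ρ s)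
        K ⟨hK, hKo, hKV⟩
end
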